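/- Let n ≥ 1, let T be an n-dimensional simplex in ℝ^n (the convex hull of n+1 affinely independent points), and let μ, ν be positive real numbers. Then vol(μT + ν·(−T)) = (∑_{i=0}^{n} C(n,i)² · μ^i · ν^{n−i}) · vol(T), where vol denotes Lebesgue measure on ℝ^n and μT + ν·(−T) = {μx − νy : x, y ∈ T} is the Minkowski sum. -/

import Mathlib

open Pointwise MeasureTheory
open ENNReal

noncomputable section

def cornerI (ι : Type*) [Fintype ι] (t : ℝ) : Set (ι → ℝ) :=
  {x | (∀ i, 0 ≤ x i) ∧ ∑ i, x i ≤ t}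

abbrev Egn (n : ℕ) := EuclideanSpace ℝ (Fin n)

def pstd (n : ℕ) : Fin (n + 1) → Egn n := Fin.cases 0 (fun j => EuclideanSpace.single j 1)

def Qset (n : ℕ) : Set (Egn n) := {x | (∀ i, 0 ≤ x i) ∧ ∑ i, x i ≤ 1}

def Dset (n : ℕ) (μ ν : ℝ) : Set (Egn n) :=
  {z | (∑ i, max (z i) 0) ≤ μ ∧ (∑ i, max (-(z i)) 0) ≤ ν}


lemma isClosed_corner (m : ℕ) (t : ℝ) : IsClosed (cornerI (Fin m) t) := by
  have h1 : IsClosed {x : Fin m → ℝ | ∀ i, 0 ≤ x i} := by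
    have : {x : Fin m → ℝ | ∀ i, 0 ≤ x i} = ⋂ i, {x | 0 ≤ x i} := by ext; simp
    rw [this]
    exact isClosed_iInter fun i => isClosed_le continuous_const (continuous_apply i)
  have h2 : IsClosed {x : Fin m → ℝ | ∑ i, x i ≤ t} :=
    isClosed_le (continuous_finset_sum _ fun i _ => continuous_apply i) continuous_const
  exact h1.inter h2

lemma corner_eq_empty (m : ℕ) (t : ℝ) (ht : t < 0) : cornerI (Fin m) t = ∅ := by
  ext x
  simp only [cornerI, Set.mem_setOf_eq, Set.mem_empty_iff_false, iff_false, not_and]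
  intro hx hs
  exact absurd (le_trans (Finset.sum_nonneg fun i _ => hx i) hs) (not_le.2 ht)

lemma volume_corner (m : ℕ) : ∀ t : ℝ, 0 ≤ t →
    volume (cornerI (Fin m) t) = ENNReal.ofReal (t ^ m / m.factorial) := by
  induction m with
  | zero =>
    intro t ht
    have : cornerI (Fin 0) t = Set.univ := by
      ext x; simp [cornerI, ht]
    rw [this]
    simp [volume_pi, Measure.pi_univ]
  | succ m ih =>
    intro t ht
    set A : Set (ℝ × (Fin m → ℝ)) :=
      {q | 0 ≤ q.1 ∧ (∀ i, 0 ≤ q.2 i) ∧ q.1 + ∑ i, q.2 i ≤ t} with hA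
    have hAm : MeasurableSet A := by
      have : IsClosed A := by
        apply IsClosed.inter (isClosed_le continuous_const continuous_fst)
        apply IsClosed.inter
        · have h : IsClosed (⋂ i, {q : ℝ × (Fin m → ℝ) | 0 ≤ q.2 i}) :=
            isClosed_iInter fun i =>
              isClosed_le continuous_const ((continuous_apply i).comp continuous_snd)
          convert h using 2
          apply Iff.of_eq; congr 1
          ext x
          simp only [Set.mem_iInter, Set.mem_setOf_eq]
          exact Iff.rfl
        · exact isClosed_le
            (continuous_fst.add (continuous_finset_sum _ fun i _ =>
              (continuous_apply i).comp continuous_snd)) continuous_const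
      exact this.measurableSet
    have hpre : cornerI (Fin (m+1)) t =
        (MeasurableEquiv.piFinSuccAbove (fun _ => ℝ) 0) ⁻¹' A := by
      ext x
      simp only [cornerI, Set.mem_setOf_eq, Set.mem_preimage,
        MeasurableEquiv.piFinSuccAbove_apply, hA, Fin.removeNth, Fin.succAbove_zero]
      rw [Fin.sum_univ_succ, Fin.forall_fin_succ]
      tauto
    have hmp := measurePreserving_piFinSuccAbove (fun _ : Fin (m+1) => (volume : Measure ℝ)) 0
    have : volume (cornerI (Fin (m+1)) t) = ((volume : Measure ℝ).prod (volume : Measure (Fin m → ℝ))) A := by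
      rw [hpre]
      rw [volume_pi]
      rw [hmp.measure_preimage hAm.nullMeasurableSet]
      rfl
    rw [this, Measure.prod_apply hAm]
    have hslice : ∀ a : ℝ, (Prod.mk a ⁻¹' A) = if 0 ≤ a then cornerI (Fin m) (t - a) else ∅ := by
      intro a
      split_ifs with ha
      · ext y
        simp only [Set.mem_preimage, hA, Set.mem_setOf_eq, cornerI]
        constructor
        · rintro ⟨_, h2, h3⟩; exact ⟨h2, by linarith⟩
        · rintro ⟨h2, h3⟩; exact ⟨ha, h2, by linarith⟩
      · ext y
        simp only [Set.mem_preimage, hA, Set.mem_setOf_eq, Set.mem_empty_iff_false, iff_false]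
        rintro ⟨h1, _⟩; exact ha h1
    have hptwise : (fun a => volume (Prod.mk a ⁻¹' A)) =
        Set.indicator (Set.Icc 0 t) (fun a => ENNReal.ofReal ((t - a) ^ m / m.factorial)) := by
      funext a
      rw [hslice a]
      by_cases ha : 0 ≤ a
      · by_cases hat : a ≤ t
        · rw [if_pos ha, ih (t - a) (by linarith),
            Set.indicator_of_mem (Set.mem_Icc.2 ⟨ha, hat⟩)]
        · rw [if_pos ha, corner_eq_empty m (t - a) (by linarith),
            Set.indicator_of_notMem (by simp [Set.mem_Icc]; intro; linarith)]
          simp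
      · rw [if_neg ha, Set.indicator_of_notMem (by simp [Set.mem_Icc]; intro; exact absurd ‹_› ha)]
        simp
    rw [hptwise, lintegral_indicator measurableSet_Icc]
    have hcont : ContinuousOn (fun a : ℝ => (t - a) ^ m / m.factorial) (Set.Icc 0 t) :=
      ((continuous_const.sub continuous_id).pow m).continuousOn.div_const _
    have hint : IntegrableOn (fun a : ℝ => (t - a) ^ m / m.factorial) (Set.Icc 0 t) :=
      hcont.integrableOn_compact isCompact_Icc
    rw [← ofReal_integral_eq_lintegral_ofReal hint]
    · congr 1
      rw [MeasureTheory.integral_Icc_eq_integral_Ioc, ← intervalIntegral.integral_of_le ht]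
      have : ∫ a in (0:ℝ)..t, (t - a) ^ m / m.factorial =
          (∫ a in (0:ℝ)..t, (t - a) ^ m) / m.factorial := by
        rw [intervalIntegral.integral_div]
      rw [this]
      have : (∫ a in (0:ℝ)..t, (t - a) ^ m) = ∫ a in (0:ℝ)..t, a ^ m := by
        have := intervalIntegral.integral_comp_sub_left (a := 0) (b := t) (fun x => x ^ m) t
        simpa using this
      rw [this, integral_pow]
      rw [Nat.factorial_succ]
      push_cast
      field_simp
      simp
    · filter_upwards [ae_restrict_mem measurableSet_Icc] with a ha
      have : 0 ≤ (t - a) ^ m := pow_nonneg (by linarith [ha.2]) m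
      positivity


section
variable {ι : Type*} [Fintype ι]

lemma measurableSet_cornerI (t : ℝ) : MeasurableSet (cornerI ι t) := by
  have h1 : MeasurableSet {x : ι → ℝ | ∀ i, 0 ≤ x i} := by
    have : {x : ι → ℝ | ∀ i, 0 ≤ x i} = ⋂ i, {x | 0 ≤ x i} := by ext; simp
    rw [this]
    exact MeasurableSet.iInter fun i => measurableSet_le measurable_const (measurable_pi_apply i)
  have h2 : MeasurableSet {x : ι → ℝ | ∑ i, x i ≤ t} :=
    measurableSet_le (Finset.measurable_sum _ fun i _ => measurable_pi_apply i) measurable_const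
  exact h1.inter h2

lemma volume_cornerI (t : ℝ) (ht : 0 ≤ t) :
    volume (cornerI ι t) = ENNReal.ofReal (t ^ (Fintype.card ι) / (Fintype.card ι).factorial) := by
  classical
  set c := Fintype.card ι
  let e : ι ≃ Fin c := Fintype.equivFin ι
  have hmp := MeasureTheory.volume_preserving_arrowCongr' (e.symm) (MeasurableEquiv.refl ℝ)
    (MeasurePreserving.id _)
  have hpre : (MeasurableEquiv.arrowCongr' e.symm (MeasurableEquiv.refl ℝ)) ⁻¹' (cornerI ι t)
      = cornerI (Fin c) t := by
    ext x
    simp only [Set.mem_preimage, MeasurableEquiv.arrowCongr', Equiv.arrowCongr',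
      Equiv.arrowCongr, MeasurableEquiv.coe_mk, Equiv.coe_fn_mk, cornerI, Set.mem_setOf_eq,
      Equiv.symm_symm, MeasurableEquiv.refl_apply, id_eq, Function.comp]
    constructor
    · rintro ⟨h1, h2⟩
      refine ⟨fun j => by simpa using h1 (e.symm j), ?_⟩
      calc ∑ j, x j = ∑ i, x (e i) := (Equiv.sum_comp e _).symm
        _ ≤ t := by simpa using h2
    · rintro ⟨h1, h2⟩
      refine ⟨fun i => h1 _, ?_⟩
      calc ∑ i, x (e i) = ∑ j, x j := Equiv.sum_comp e _
        _ ≤ t := h2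
  rw [← hmp.measure_preimage (measurableSet_cornerI t).nullMeasurableSet, hpre]
  exact volume_corner c t ht

lemma volume_eval_zero [Nonempty ι] (i : ι) : volume {x : ι → ℝ | x i = 0} = 0 := by
  classical
  have : {x : ι → ℝ | x i = 0} = Set.pi Set.univ (fun j => if j = i then ({0} : Set ℝ) else Set.univ) := by
    ext x
    simp only [Set.mem_setOf_eq, Set.mem_pi, Set.mem_univ, forall_true_left]
    constructor
    · intro h j; by_cases hj : j = i <;> simp [hj, h]
    · intro h; have := h i; simpa using this
  rw [this, volume_pi_pi]
  exact Finset.prod_eq_zero (Finset.mem_univ i) (by simp)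

lemma volume_cornerS (t : ℝ) (ht : 0 ≤ t) :
    volume {x : ι → ℝ | (∀ i, 0 < x i) ∧ ∑ i, x i ≤ t}
      = ENNReal.ofReal (t ^ (Fintype.card ι) / (Fintype.card ι).factorial) := by
  classical
  rcases isEmpty_or_nonempty ι with h | h
  · have : {x : ι → ℝ | (∀ i, 0 < x i) ∧ ∑ i, x i ≤ t} = cornerI ι t := by
      ext x; simp [cornerI, ht]
    rw [this]; exact volume_cornerI t ht
  · rw [← volume_cornerI t ht]
    apply le_antisymm
    · apply measure_mono
      rintro x ⟨h1, h2⟩; exact ⟨fun i => (h1 i).le, h2⟩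
    · calc volume (cornerI ι t)
          ≤ volume ({x : ι → ℝ | (∀ i, 0 < x i) ∧ ∑ i, x i ≤ t} ∪ ⋃ i, {x | x i = 0}) := by
            apply measure_mono
            rintro x ⟨h1, h2⟩
            by_cases hs : ∀ i, 0 < x i
            · exact Or.inl ⟨hs, h2⟩
            · push_neg at hs
              obtain ⟨i, hi⟩ := hs
              exact Or.inr (Set.mem_iUnion.2 ⟨i, le_antisymm hi (h1 i)⟩)
        _ ≤ volume {x : ι → ℝ | (∀ i, 0 < x i) ∧ ∑ i, x i ≤ t} + volume (⋃ i, {x : ι → ℝ | x i = 0}) :=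
            measure_union_le _ _
        _ = volume {x : ι → ℝ | (∀ i, 0 < x i) ∧ ∑ i, x i ≤ t} := by
            rw [measure_iUnion_null fun i => volume_eval_zero i, add_zero]

lemma volume_negCorner (t : ℝ) (ht : 0 ≤ t) :
    volume {y : ι → ℝ | (∀ i, y i ≤ 0) ∧ ∑ i, -(y i) ≤ t}
      = ENNReal.ofReal (t ^ (Fintype.card ι) / (Fintype.card ι).factorial) := by
  have : {y : ι → ℝ | (∀ i, y i ≤ 0) ∧ ∑ i, -(y i) ≤ t} = -(cornerI ι t) := by
    ext y
    simp only [Set.mem_neg, cornerI, Set.mem_setOf_eq, Pi.neg_apply]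
    constructor
    · rintro ⟨h1, h2⟩; exact ⟨fun i => by simpa using neg_nonneg.2 (h1 i), h2⟩
    · rintro ⟨h1, h2⟩; exact ⟨fun i => by simpa using neg_nonneg.1 (by simpa using h1 i), h2⟩
  rw [this, Measure.measure_neg, volume_cornerI t ht]

end


theorem volume_diffBody (n : ℕ) (μ ν : ℝ) (hμ : 0 < μ) (hν : 0 < ν) :
    volume {z : Fin n → ℝ | (∑ i, max (z i) 0) ≤ μ ∧ (∑ i, max (-(z i)) 0) ≤ ν}
      = ENNReal.ofReal ((∑ i ∈ Finset.range (n + 1),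
          (n.choose i : ℝ) ^ 2 * μ ^ i * ν ^ (n - i)) / n.factorial) := by
  classical
  set D := {z : Fin n → ℝ | (∑ i, max (z i) 0) ≤ μ ∧ (∑ i, max (-(z i)) 0) ≤ ν} with hD
  -- pieces
  set P : Finset (Fin n) → Set (Fin n → ℝ) := fun S =>
    {z | (∀ i ∈ S, 0 < z i) ∧ (∀ i ∉ S, z i ≤ 0) ∧
         (∑ i ∈ S, z i) ≤ μ ∧ (∑ i ∈ Sᶜ, -(z i)) ≤ ν} with hP
  have hDunion : D = ⋃ S : Finset (Fin n), P S := by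
    ext z
    simp only [hD, Set.mem_setOf_eq, Set.mem_iUnion, hP]
    constructor
    · rintro ⟨h1, h2⟩
      refine ⟨Finset.univ.filter (fun i => 0 < z i), fun i hi => (Finset.mem_filter.1 hi).2,
        fun i hi => ?_, ?_, ?_⟩
      · by_contra h; push_neg at h
        exact hi (Finset.mem_filter.2 ⟨Finset.mem_univ i, h⟩)
      · calc ∑ i ∈ Finset.univ.filter (fun i => 0 < z i), z i
            = ∑ i ∈ Finset.univ.filter (fun i => 0 < z i), max (z i) 0 := by
              apply Finset.sum_congr rfl
              intro i hi
              rw [max_eq_left (le_of_lt (Finset.mem_filter.1 hi).2)]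
          _ ≤ ∑ i, max (z i) 0 := by
              apply Finset.sum_le_sum_of_subset_of_nonneg (Finset.filter_subset _ _)
              intro i _ _; exact le_max_right _ _
          _ ≤ μ := h1
      · calc ∑ i ∈ (Finset.univ.filter (fun i => 0 < z i))ᶜ, -(z i)
            = ∑ i ∈ (Finset.univ.filter (fun i => 0 < z i))ᶜ, max (-(z i)) 0 := by
              apply Finset.sum_congr rfl
              intro i hi
              have : ¬ 0 < z i := by
                intro h
                exact (Finset.mem_compl.1 hi) (Finset.mem_filter.2 ⟨Finset.mem_univ i, h⟩)
              rw [max_eq_left (by linarith [not_lt.1 this])]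
          _ ≤ ∑ i, max (-(z i)) 0 := by
              apply Finset.sum_le_sum_of_subset_of_nonneg (Finset.subset_univ _)
              intro i _ _; exact le_max_right _ _
          _ ≤ ν := h2
    · rintro ⟨S, h1, h2, h3, h4⟩
      constructor
      · calc ∑ i, max (z i) 0 = ∑ i ∈ S, max (z i) 0 + ∑ i ∈ Sᶜ, max (z i) 0 := by
              rw [Finset.sum_add_sum_compl]
          _ = ∑ i ∈ S, z i + 0 := by
              congr 1
              · exact Finset.sum_congr rfl fun i hi => max_eq_left (h1 i hi).le
              · apply Finset.sum_eq_zero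
                intro i hi
                exact max_eq_right (h2 i (Finset.mem_compl.1 hi))
          _ ≤ μ := by rw [add_zero]; exact h3
      · calc ∑ i, max (-(z i)) 0 = ∑ i ∈ S, max (-(z i)) 0 + ∑ i ∈ Sᶜ, max (-(z i)) 0 := by
              rw [Finset.sum_add_sum_compl]
          _ = 0 + ∑ i ∈ Sᶜ, -(z i) := by
              congr 1
              · apply Finset.sum_eq_zero
                intro i hi
                exact max_eq_right (by linarith [(h1 i hi).le])
              · apply Finset.sum_congr rfl
                intro i hi
                exact max_eq_left (by linarith [h2 i (Finset.mem_compl.1 hi)])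
          _ ≤ ν := by rw [zero_add]; exact h4
  have hPmeas : ∀ S : Finset (Fin n), MeasurableSet (P S) := by
    intro S
    apply MeasurableSet.inter
    · show MeasurableSet {z : Fin n → ℝ | ∀ i ∈ S, 0 < z i}
      have : {z : Fin n → ℝ | ∀ i ∈ S, 0 < z i} = ⋂ i ∈ S, {z | 0 < z i} := by ext; simp
      rw [this]
      exact MeasurableSet.biInter S.countable_toSet fun i _ =>
        measurableSet_lt measurable_const (measurable_pi_apply i)
    apply MeasurableSet.inter
    · show MeasurableSet {z : Fin n → ℝ | ∀ i ∉ S, z i ≤ 0}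
      have : {z : Fin n → ℝ | ∀ i ∉ S, z i ≤ 0} = ⋂ i ∈ Sᶜ, {z | z i ≤ 0} := by
        ext; simp
      rw [this]
      exact MeasurableSet.biInter (Sᶜ).countable_toSet fun i _ =>
        measurableSet_le (measurable_pi_apply i) measurable_const
    apply MeasurableSet.inter
    · exact measurableSet_le (Finset.measurable_sum _ fun i _ => measurable_pi_apply i)
        measurable_const
    · exact measurableSet_le (Finset.measurable_sum _ fun i _ => (measurable_pi_apply i).neg)
        measurable_const
  have hdisj : Pairwise (Function.onFun Disjoint P) := by
    intro S S' hne
    rw [Function.onFun, Set.disjoint_left]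
    rintro z ⟨h1, h2, -, -⟩ ⟨h1', h2', -, -⟩
    apply hne
    ext i
    constructor
    · intro hi
      by_contra hi'
      exact absurd (h1 i hi) (not_lt.2 (h2' i hi'))
    · intro hi
      by_contra hi'
      exact absurd (h1' i hi) (not_lt.2 (h2 i hi'))
  have hvol : volume D = ∑' S : Finset (Fin n), volume (P S) := by
    rw [hDunion, measure_iUnion hdisj hPmeas]
  -- volume of each piece
  have hpiece : ∀ S : Finset (Fin n),
      volume (P S) = ENNReal.ofReal (μ ^ S.card / S.card.factorial) *
        ENNReal.ofReal (ν ^ (n - S.card) / (n - S.card).factorial) := by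
    intro S
    set A : Set ({i // i ∈ S} → ℝ) := {u | (∀ i, 0 < u i) ∧ ∑ i, u i ≤ μ} with hA
    set B : Set ({i // ¬ i ∈ S} → ℝ) := {v | (∀ i, v i ≤ 0) ∧ ∑ i, -(v i) ≤ ν} with hB
    have hAmeas : MeasurableSet A := by
      apply MeasurableSet.inter
      · show MeasurableSet {u : {i // i ∈ S} → ℝ | ∀ i, 0 < u i}
        have : {u : {i // i ∈ S} → ℝ | ∀ i, 0 < u i} = ⋂ i, {u | 0 < u i} := by ext; simp
        rw [this]
        exact MeasurableSet.iInter fun i =>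
          measurableSet_lt measurable_const (measurable_pi_apply i)
      · exact measurableSet_le (Finset.measurable_sum _ fun i _ => measurable_pi_apply i)
          measurable_const
    have hBmeas : MeasurableSet B := by
      apply MeasurableSet.inter
      · show MeasurableSet {v : {i // ¬ i ∈ S} → ℝ | ∀ i, v i ≤ 0}
        have : {v : {i // ¬ i ∈ S} → ℝ | ∀ i, v i ≤ 0} = ⋂ i, {v | v i ≤ 0} := by ext; simp
        rw [this]
        exact MeasurableSet.iInter fun i =>
          measurableSet_le (measurable_pi_apply i) measurable_const
      · exact measurableSet_le (Finset.measurable_sum _ fun i _ => (measurable_pi_apply i).neg)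
          measurable_const
    have hmp := MeasureTheory.volume_preserving_piEquivPiSubtypeProd
      (fun _ : Fin n => ℝ) (fun i => i ∈ S)
    have hpre : P S = (MeasurableEquiv.piEquivPiSubtypeProd (fun _ : Fin n => ℝ) (fun i => i ∈ S))
        ⁻¹' (A ×ˢ B) := by
      ext z
      simp only [hP, Set.mem_setOf_eq, Set.mem_preimage,
        MeasurableEquiv.piEquivPiSubtypeProd_apply, Set.mem_prod, hA, hB]
      have e1 : (∀ i : {i // i ∈ S}, 0 < z i) ↔ ∀ i ∈ S, 0 < z i := Subtype.forall
      have e2 : (∑ i : {i // i ∈ S}, z i) = ∑ i ∈ S, z i := Finset.sum_coe_sort S z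
      have e3 : (∀ i : {i // ¬ i ∈ S}, z i ≤ 0) ↔ ∀ i ∉ S, z i ≤ 0 := Subtype.forall
      have e4 : (∑ i : {i // ¬ i ∈ S}, -(z i)) = ∑ i ∈ Sᶜ, -(z i) :=
        (Finset.sum_subtype Sᶜ (fun i => Finset.mem_compl) (fun i => -(z i))).symm
      rw [e1, e2, e3, e4]
      tauto
    rw [hpre, hmp.measure_preimage ((hAmeas.prod hBmeas)).nullMeasurableSet,
      Measure.volume_eq_prod, Measure.prod_prod]
    have cA : Fintype.card {i // i ∈ S} = S.card := Fintype.card_coe S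
    have cB : Fintype.card {i // ¬ i ∈ S} = n - S.card := by
      rw [Fintype.card_subtype_compl, Fintype.card_coe, Fintype.card_fin]
    rw [hA, hB]
    congr 1
    · have vA := @volume_cornerS {i // i ∈ S} (Subtype.fintype fun i => i ∈ S) μ hμ.le
      rw [Fintype.card_coe] at vA
      have e : (Finset.Subtype.fintype S) = (Subtype.fintype fun i => i ∈ S) :=
        Subsingleton.elim _ _
      rw [e]
      exact vA
    · have vB := @volume_negCorner {i // ¬ i ∈ S} (Subtype.fintype _) ν hν.le
      rw [show @Fintype.card {i // ¬ i ∈ S} (Subtype.fintype _) = n - S.card from by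
        rw [Fintype.card_subtype_compl, Fintype.card_coe, Fintype.card_fin]] at vB
      exact vB
  rw [hvol, tsum_fintype]
  simp_rw [hpiece]
  -- combine ofReals
  have hcomb : ∀ S : Finset (Fin n),
      ENNReal.ofReal (μ ^ S.card / S.card.factorial) *
        ENNReal.ofReal (ν ^ (n - S.card) / (n - S.card).factorial)
      = ENNReal.ofReal ((μ ^ S.card / S.card.factorial) *
          (ν ^ (n - S.card) / (n - S.card).factorial)) := by
    intro S
    rw [ENNReal.ofReal_mul (by positivity)]
  simp_rw [hcomb]
  rw [← ENNReal.ofReal_sum_of_nonneg (fun S _ => by positivity)]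
  congr 1
  -- real computation
  have : (Finset.univ : Finset (Finset (Fin n))) = (Finset.univ : Finset (Fin n)).powerset := by
    rw [Finset.powerset_univ]
  rw [this, Finset.sum_powerset]
  rw [Finset.card_univ, Fintype.card_fin, Finset.sum_div]
  apply Finset.sum_congr rfl
  intro k hk
  have hkn : k ≤ n := Nat.lt_succ_iff.1 (Finset.mem_range.1 hk)
  have hcard : ∀ S ∈ Finset.powersetCard k (Finset.univ : Finset (Fin n)), S.card = k :=
    fun S hS => (Finset.mem_powersetCard.1 hS).2
  rw [Finset.sum_congr rfl (fun S hS => by rw [hcard S hS])]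
  rw [Finset.sum_const, Finset.card_powersetCard, Finset.card_univ, Fintype.card_fin]
  rw [nsmul_eq_mul]
  have hfact : (n.choose k : ℝ) * (k.factorial * (n - k).factorial) = n.factorial := by
    rw_mod_cast [← Nat.choose_mul_factorial_mul_factorial hkn]
    push_cast
    ring
  have h1 : (k.factorial : ℝ) ≠ 0 := Nat.cast_ne_zero.2 k.factorial_ne_zero
  have h2 : ((n - k).factorial : ℝ) ≠ 0 := Nat.cast_ne_zero.2 (n - k).factorial_ne_zero
  have h3 : (n.factorial : ℝ) ≠ 0 := Nat.cast_ne_zero.2 n.factorial_ne_zero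
  have hc : (n.choose k : ℝ) ≠ 0 := by
    exact_mod_cast (Nat.choose_pos hkn).ne'
  rw [← hfact]
  field_simp


section hull
variable (n : ℕ)

lemma convex_Qset : Convex ℝ (Qset n) := by
  have : Qset n = (⋂ i, {x : Egn n | 0 ≤ x i}) ∩ {x : Egn n | ∑ i, x i ≤ 1} := by
    ext x; simp [Qset]
  rw [this]
  apply Convex.inter
  · exact convex_iInter fun i =>
      convex_halfSpace_ge (⟨fun a b => rfl, fun c a => rfl⟩ : IsLinearMap ℝ fun x : Egn n => x i) 0
  · exact convex_halfSpace_le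
      (⟨fun a b => by simp [Finset.sum_add_distrib], fun c a => by simp [Finset.mul_sum]⟩ :
        IsLinearMap ℝ fun x : Egn n => ∑ i, x i) 1

lemma hull_pstd : convexHull ℝ (Set.range (pstd n)) = Qset n := by
  apply le_antisymm
  · apply convexHull_min _ (convex_Qset n)
    rintro _ ⟨i, rfl⟩
    induction i using Fin.cases with
    | zero =>
      constructor
      · intro i; simp [pstd]
      · simp [pstd]
    | succ j =>
      constructor
      · intro i
        simp only [pstd, Fin.cases_succ, EuclideanSpace.single_apply]
        split_ifs <;> norm_num
      · simp only [pstd, Fin.cases_succ, EuclideanSpace.single_apply]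
        rw [Finset.sum_ite_eq' Finset.univ j (fun _ => (1:ℝ))]
        simp
  · rintro x ⟨hx0, hx1⟩
    classical
    set w : Fin (n+1) → ℝ := Fin.cases (1 - ∑ j, x j) (fun j => x j) with hw
    have hw0 : ∀ i ∈ Finset.univ, 0 ≤ w i := by
      intro i _
      induction i using Fin.cases with
      | zero => simp [hw]; linarith
      | succ j => simp [hw]; exact hx0 j
    have hwsum : ∑ i, w i = 1 := by
      rw [Fin.sum_univ_succ]
      simp [hw]
    have hmem := Finset.centerMass_mem_convexHull Finset.univ hw0 (by rw [hwsum]; norm_num)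
      (fun i (_ : i ∈ Finset.univ) => Set.mem_range_self (f := pstd n) i)
    rwa [Finset.centerMass_eq_of_sum_1 _ _ hwsum, show ∑ i, w i • pstd n i = x from ?_] at hmem
    rw [Fin.sum_univ_succ]
    simp only [hw, Fin.cases_zero, Fin.cases_succ, pstd, smul_zero, zero_add]
    ext k
    have happ : (∑ j, x j • EuclideanSpace.single j (1:ℝ)) k
        = ∑ j, (x j • EuclideanSpace.single j (1:ℝ)) k := by
      rw [WithLp.ofLp_sum, Finset.sum_apply]
    rw [happ]
    simp only [PiLp.smul_apply, EuclideanSpace.single_apply, smul_eq_mul, mul_ite, mul_one,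
      mul_zero]
    rw [Finset.sum_ite_eq Finset.univ k (fun j => x j)]
    simp
end hull

section diffb
variable {n : ℕ}

lemma smul_Q_add_smul_neg_Q (μ ν : ℝ) (hμ : 0 < μ) (hν : 0 < ν) :
    μ • Qset n + ν • (-Qset n) = Dset n μ ν := by
  ext z
  constructor
  · rintro ⟨a, ⟨x, hx, rfl⟩, b, ⟨y', hy', rfl⟩, rfl⟩
    obtain ⟨hy : ∀ i, 0 ≤ (-y') i, hysum⟩ := hy'
    constructor
    · calc ∑ i, max ((μ • x + ν • y') i) 0 ≤ ∑ i, μ * x i := by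
            apply Finset.sum_le_sum
            intro i _
            apply max_le
            · simp only [PiLp.add_apply, PiLp.smul_apply, smul_eq_mul]
              have := hy i
              simp only [PiLp.neg_apply] at this
              nlinarith [hx.1 i]
            · exact mul_nonneg hμ.le (hx.1 i)
        _ = μ * ∑ i, x i := by rw [Finset.mul_sum]
        _ ≤ μ := by nlinarith [hx.2]
    · calc ∑ i, max (-((μ • x + ν • y') i)) 0 ≤ ∑ i, ν * (-y') i := by
            apply Finset.sum_le_sum
            intro i _
            apply max_le
            · simp only [PiLp.add_apply, PiLp.smul_apply, smul_eq_mul, PiLp.neg_apply]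
              have := hy i
              simp only [PiLp.neg_apply] at this
              nlinarith [hx.1 i]
            · have := hy i
              simp only [PiLp.neg_apply] at this
              positivity
        _ = ν * ∑ i, (-y') i := by rw [Finset.mul_sum]
        _ ≤ ν := by nlinarith [hysum]
  · rintro ⟨h1, h2⟩
    set xw : Egn n := WithLp.toLp 2 (fun i => μ⁻¹ * max (z i) 0 : Fin n → ℝ) with hxw
    set yw : Egn n := WithLp.toLp 2 (fun i => -(ν⁻¹ * max (-(z i)) 0) : Fin n → ℝ) with hyw
    have hxQ : xw ∈ Qset n := by
      constructor
      · intro i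
        show 0 ≤ μ⁻¹ * max (z i) 0
        positivity
      · show ∑ i, μ⁻¹ * max (z i) 0 ≤ 1
        calc ∑ i, μ⁻¹ * max (z i) 0 = μ⁻¹ * ∑ i, max (z i) 0 := by rw [Finset.mul_sum]
          _ ≤ μ⁻¹ * μ := mul_le_mul_of_nonneg_left h1 (by positivity)
          _ = 1 := inv_mul_cancel₀ hμ.ne'
    have hyQ : yw ∈ -Qset n := by
      show -yw ∈ Qset n
      constructor
      · intro i
        have : (-yw) i = ν⁻¹ * max (-(z i)) 0 := by
          simp [hyw]
        rw [this]
        positivity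
      · have : ∀ i : Fin n, (-yw) i = ν⁻¹ * max (-(z i)) 0 := by
          intro i; simp [hyw]
        rw [Finset.sum_congr rfl fun i _ => this i]
        calc ∑ i, ν⁻¹ * max (-(z i)) 0 = ν⁻¹ * ∑ i, max (-(z i)) 0 := by rw [Finset.mul_sum]
          _ ≤ ν⁻¹ * ν := mul_le_mul_of_nonneg_left h2 (by positivity)
          _ = 1 := inv_mul_cancel₀ hν.ne'
    refine ⟨μ • xw, ⟨xw, hxQ, rfl⟩, ν • yw, ⟨yw, hyQ, rfl⟩, ?_⟩
    ext k
    show μ * xw k + ν * yw k = z k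
    have h1' : xw k = μ⁻¹ * max (z k) 0 := rfl
    have h2' : yw k = -(ν⁻¹ * max (-(z k)) 0) := rfl
    rw [h1', h2', mul_neg, ← mul_assoc, ← mul_assoc, mul_inv_cancel₀ hμ.ne',
      mul_inv_cancel₀ hν.ne', one_mul, one_mul, ← sub_eq_add_neg]
    exact max_zero_sub_max_neg_zero_eq_self (z k)

end diffb

-- transfer between EuclideanSpace volume and pi volume
lemma volume_transfer {n : ℕ} (A : Set (Fin n → ℝ)) (hA : MeasurableSet A) :
    volume ((MeasurableEquiv.toLp 2 (Fin n → ℝ)).symm ⁻¹' A) = volume A :=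
  (EuclideanSpace.volume_preserving_symm_measurableEquiv_toLp (Fin n)).measure_preimage
    hA.nullMeasurableSet

lemma volume_Qset (n : ℕ) : volume (Qset n) = ENNReal.ofReal (1 / n.factorial) := by
  have : Qset n = (MeasurableEquiv.toLp 2 (Fin n → ℝ)).symm ⁻¹' (cornerI (Fin n) 1) := rfl
  rw [this, volume_transfer _ (measurableSet_cornerI 1), volume_cornerI 1 zero_le_one]
  simp

lemma measurableSet_diffBody (n : ℕ) (μ ν : ℝ) :
    MeasurableSet {z : Fin n → ℝ | (∑ i, max (z i) 0) ≤ μ ∧ (∑ i, max (-(z i)) 0) ≤ ν} := by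
  apply MeasurableSet.inter
  · exact measurableSet_le
      (Finset.measurable_sum _ fun i _ => (measurable_pi_apply i).max measurable_const)
      measurable_const
  · exact measurableSet_le
      (Finset.measurable_sum _ fun i _ => (measurable_pi_apply i).neg.max measurable_const)
      measurable_const

lemma volume_Dset (n : ℕ) (μ ν : ℝ) (hμ : 0 < μ) (hν : 0 < ν) :
    volume (Dset n μ ν) = ENNReal.ofReal ((∑ i ∈ Finset.range (n + 1),
        (n.choose i : ℝ) ^ 2 * μ ^ i * ν ^ (n - i)) / n.factorial) := by
  have : Dset n μ ν = (MeasurableEquiv.toLp 2 (Fin n → ℝ)).symm ⁻¹'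
      {z : Fin n → ℝ | (∑ i, max (z i) 0) ≤ μ ∧ (∑ i, max (-(z i)) 0) ≤ ν} := rfl
  rw [this, volume_transfer _ (measurableSet_diffBody n μ ν), volume_diffBody n μ ν hμ hν]

set_option maxHeartbeats 2000000 in
/-- For an `n`-dimensional simplex `T` in `ℝ^n` and positive reals `μ, ν`,
`vol(μT + ν(−T)) = (∑_{i=0}^{n} C(n,i)² μ^i ν^{n−i}) · vol(T)`. -/
theorem vol_smul_add_smul_neg_simplex (n : ℕ) (hn : 1 ≤ n)
    (p : Fin (n + 1) → EuclideanSpace ℝ (Fin n)) (hp : AffineIndependent ℝ p)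
    (T : Set (EuclideanSpace ℝ (Fin n))) (hT : T = convexHull ℝ (Set.range p))
    (μ ν : ℝ) (hμ : 0 < μ) (hν : 0 < ν) :
    volume (μ • T + ν • (-T)) =
      ENNReal.ofReal (∑ i ∈ Finset.range (n + 1),
        (n.choose i : ℝ) ^ 2 * μ ^ i * ν ^ (n - i)) * volume T := by
  classical
  haveI : Nonempty (Fin n) := ⟨⟨0, hn⟩⟩
  -- the linearly independent difference family
  set v : Fin n → Egn n := fun j => p j.succ - p 0 with hv
  have hvli : LinearIndependent ℝ v := by
    have h := (affineIndependent_iff_linearIndependent_vsub ℝ p 0).1 hp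
    have hg : Function.Injective (fun j : Fin n => (⟨j.succ, Fin.succ_ne_zero j⟩ :
        {x : Fin (n+1) // x ≠ 0})) := by
      intro a b hab
      have h2 : a.succ = b.succ := congrArg Subtype.val hab
      exact Fin.succ_injective n h2
    exact (h.comp _ hg :)
  have hcard : Fintype.card (Fin n) = Module.finrank ℝ (Egn n) := by
    simp [finrank_euclideanSpace_fin]
  let b : Module.Basis (Fin n) ℝ (Egn n) := basisOfLinearIndependentOfCardEqFinrank hvli hcard
  have hb : ∀ j, b j = v j := fun j => coe_basisOfLinearIndependentOfCardEqFinrank hvli hcard ▸ rfl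
  let std : Module.Basis (Fin n) ℝ (Egn n) := (EuclideanSpace.basisFun (Fin n) ℝ).toBasis
  let L : Egn n ≃ₗ[ℝ] Egn n := std.equiv b (Equiv.refl _)
  have hL : ∀ j, L (EuclideanSpace.single j 1) = v j := by
    intro j
    have h1 : std j = EuclideanSpace.single j 1 := by
      simp [std]
    rw [← h1, Module.Basis.equiv_apply, Equiv.refl_apply, hb]
  -- T as affine image of Qset
  set c : Egn n := p 0 with hc
  set af : Egn n →ᵃ[ℝ] Egn n :=
    (AffineEquiv.constVAdd ℝ (Egn n) c).toAffineMap.comp (L : Egn n →ₗ[ℝ] Egn n).toAffineMap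
    with haf
  have haf_apply : ∀ x, af x = c + L x := fun x => rfl
  have hafp : ∀ i, af (pstd n i) = p i := by
    intro i
    induction i using Fin.cases with
    | zero => rw [haf_apply]; simp [pstd, c]
    | succ j =>
      rw [haf_apply]
      show c + L (EuclideanSpace.single j 1) = p j.succ
      rw [hL j, hv]
      simp [c]
  have hTim : T = ⇑af '' Qset n := by
    rw [hT, ← hull_pstd n, AffineMap.image_convexHull]
    have : Set.range p = ⇑af '' Set.range (pstd n) := by
      rw [← Set.range_comp]
      exact congrArg Set.range (funext fun i => (hafp i).symm)
    rw [this]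
  -- Minkowski algebra
  have key : μ • T + ν • (-T) = ((μ - ν) • c) +ᵥ (⇑L '' (μ • Qset n + ν • (-Qset n))) := by
    ext z
    constructor
    · rintro ⟨a, ⟨x, hx, rfl⟩, b', ⟨y, hy, rfl⟩, rfl⟩
      rw [hTim] at hx
      obtain ⟨u, hu, rfl⟩ := hx
      rw [Set.mem_neg, hTim] at hy
      obtain ⟨w, hw, hwy⟩ := hy
      have hyw : y = -(c + L w) := by rw [← haf_apply w, hwy, neg_neg]
      refine ⟨L (μ • u + ν • (-w)), ⟨μ • u + ν • (-w),
        ⟨μ • u, ⟨u, hu, rfl⟩, ν • (-w), ⟨-w, by rwa [Set.mem_neg, neg_neg], rfl⟩, rfl⟩, rfl⟩, ?_⟩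
      rw [haf_apply, hyw]
      simp only [vadd_eq_add, map_add, _root_.map_smul, map_neg, smul_add, smul_neg, smul_sub, sub_smul]
      abel
    · rintro ⟨_, ⟨w, ⟨a, ⟨x, hx, rfl⟩, b', ⟨y, hy, rfl⟩, rfl⟩, rfl⟩, rfl⟩
      rw [Set.mem_neg] at hy
      refine ⟨μ • (af x), ⟨af x, by rw [hTim]; exact Set.mem_image_of_mem _ hx, rfl⟩,
        ν • (-(af (-y))), ⟨-(af (-y)), by
          rw [Set.mem_neg, neg_neg, hTim]; exact Set.mem_image_of_mem _ hy, rfl⟩, ?_⟩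
      rw [haf_apply, haf_apply]
      simp only [vadd_eq_add, map_add, _root_.map_smul, map_neg, smul_add, smul_neg, smul_sub, sub_smul]
      abel
  -- volumes
  have hvolL : ∀ X : Set (Egn n), volume (⇑L '' X)
      = ENNReal.ofReal |LinearMap.det (L : Egn n →ₗ[ℝ] Egn n)| * volume X := fun X =>
    Measure.addHaar_image_linearMap volume (L : Egn n →ₗ[ℝ] Egn n) X
  set d : ℝ := |LinearMap.det (L : Egn n →ₗ[ℝ] Egn n)| with hd
  have hTvol : volume T = ENNReal.ofReal d * ENNReal.ofReal (1 / n.factorial) := by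
    rw [hTim]
    have : ⇑af '' Qset n = c +ᵥ (⇑L '' Qset n) := by
      ext z
      simp only [Set.mem_image, Set.mem_vadd_set]
      constructor
      · rintro ⟨x, hx, rfl⟩
        exact ⟨L x, ⟨x, hx, rfl⟩, by rw [haf_apply]; rfl⟩
      · rintro ⟨_, ⟨x, hx, rfl⟩, rfl⟩
        exact ⟨x, hx, (haf_apply x).symm⟩
    rw [this, measure_vadd, hvolL, volume_Qset n]
  rw [key, measure_vadd, hvolL, smul_Q_add_smul_neg_Q μ ν hμ hν, volume_Dset n μ ν hμ hν, hTvol]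
  rw [← ENNReal.ofReal_mul (by positivity), ← ENNReal.ofReal_mul (abs_nonneg _),
    ← ENNReal.ofReal_mul (by positivity)]
  congr 1
  have hsum0 : 0 ≤ ∑ i ∈ Finset.range (n + 1), (n.choose i : ℝ) ^ 2 * μ ^ i * ν ^ (n - i) := by
    apply Finset.sum_nonneg
    intro i _
    positivity
  field_simp
  ring
end
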